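/- arXiv:2210.04226 — 4 statements merged into one kernel-verified Lean document; each statement's English description precedes it below -/
import Mathlib

section
/- Let Z ⊆ ℂⁿ and let ζ ∈ ℂⁿ be a unit vector. Then every asymptotic direction θ of Z satisfies Re⟨θ,ζ⟩ > 0 if and only if there exist r ∈ ℝ, σ > 0 and R > 0 such that Re⟨z,ζ⟩ > r for every z ∈ Z and Re⟨z,ζ⟩ ≥ σ‖z‖ for every z ∈ Z with ‖z‖ ≥ R. (This expresses that Z is properly contained in a half space of the radial compactification of ℂⁿ with direction ζ if and only if ζ ∈ ĤPC(Z).) -/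
open Filter Topology

/-- The bilinear pairing `⟨z, ζ⟩ = Σ_k z_k ζ_k` on `ℂⁿ`. -/
noncomputable def pairing {n : ℕ} (z ζ : EuclideanSpace ℂ (Fin n)) : ℂ :=
  ∑ k, z k * ζ k

/-- `θ` is an asymptotic direction of `Z ⊆ ℂⁿ`: a unit vector which is the limit of
directions `z_k/‖z_k‖` of a sequence `z_k ∈ Z` with `‖z_k‖ → ∞`. -/
def IsAsympDir {n : ℕ} (Z : Set (EuclideanSpace ℂ (Fin n)))
    (θ : EuclideanSpace ℂ (Fin n)) : Prop :=
  ‖θ‖ = 1 ∧ ∃ u : ℕ → EuclideanSpace ℂ (Fin n),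
    (∀ k, u k ∈ Z) ∧ Tendsto (fun k => ‖u k‖) atTop atTop ∧
    Tendsto (fun k => (‖u k‖)⁻¹ • u k) atTop (𝓝 θ)

noncomputable def conjVec {n : ℕ} (ζ : EuclideanSpace ℂ (Fin n)) : EuclideanSpace ℂ (Fin n) :=
  WithLp.toLp 2 (fun k => (starRingEnd ℂ) (ζ k))

lemma pairing_eq_inner {n : ℕ} (z ζ : EuclideanSpace ℂ (Fin n)) :
    pairing z ζ = inner ℂ (conjVec ζ) z := by
  simp [pairing, conjVec, PiLp.inner_apply, RCLike.inner_apply, mul_comm]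

lemma norm_conjVec {n : ℕ} (ζ : EuclideanSpace ℂ (Fin n)) : ‖conjVec ζ‖ = ‖ζ‖ := by
  simp [EuclideanSpace.norm_eq, conjVec]

lemma pairing_smul {n : ℕ} (c : ℝ) (z ζ : EuclideanSpace ℂ (Fin n)) :
    pairing (c • z) ζ = (c : ℂ) * pairing z ζ := by
  simp [pairing, Finset.mul_sum, mul_assoc]

lemma pairing_smul_re {n : ℕ} (c : ℝ) (z ζ : EuclideanSpace ℂ (Fin n)) :
    (pairing (c • z) ζ).re = c * (pairing z ζ).re := by
  rw [pairing_smul, Complex.re_ofReal_mul]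

lemma abs_pairing_le {n : ℕ} (z ζ : EuclideanSpace ℂ (Fin n)) :
    ‖pairing z ζ‖ ≤ ‖z‖ * ‖ζ‖ := by
  rw [pairing_eq_inner]
  calc ‖inner ℂ (conjVec ζ) z‖ = ‖(inner ℂ (conjVec ζ) z : ℂ)‖ := rfl
    _ ≤ ‖conjVec ζ‖ * ‖z‖ := norm_inner_le_norm _ _
    _ = ‖z‖ * ‖ζ‖ := by rw [norm_conjVec]; ring

lemma cont_pairing {n : ℕ} (ζ : EuclideanSpace ℂ (Fin n)) :
    Continuous (fun z : EuclideanSpace ℂ (Fin n) => (pairing z ζ).re) := by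
  simp only [pairing_eq_inner]
  exact Complex.continuous_re.comp (Continuous.inner continuous_const continuous_id)

/-- `Z` is properly contained in a half space of `𝔻_{ℂⁿ}` with direction `ζ`
(a unit vector) if and only if `ζ ∈ ĤPC(Z)`, i.e. every asymptotic direction `θ` of `Z`
satisfies `Re⟨θ,ζ⟩ > 0`. -/
theorem properly_contained_in_halfspace_iff_mem_HPC {n : ℕ}
    (Z : Set (EuclideanSpace ℂ (Fin n))) (ζ : EuclideanSpace ℂ (Fin n))
    (hζ : ‖ζ‖ = 1) :
    (∀ θ, IsAsympDir Z θ → 0 < (pairing θ ζ).re) ↔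
      ∃ r : ℝ, ∃ σ > (0 : ℝ), ∃ R > (0 : ℝ),
        (∀ z ∈ Z, r < (pairing z ζ).re) ∧
        (∀ z ∈ Z, R ≤ ‖z‖ → σ * ‖z‖ ≤ (pairing z ζ).re) := by
  constructor
  · intro h
    have hσR : ∃ σ > (0:ℝ), ∃ R > (0:ℝ), ∀ z ∈ Z, R ≤ ‖z‖ → σ * ‖z‖ ≤ (pairing z ζ).re := by
      by_contra hc
      push_neg at hc
      have hex : ∀ k : ℕ, ∃ z ∈ Z, ((k:ℝ)+1 ≤ ‖z‖ ∧ (pairing z ζ).re < ((k:ℝ)+1)⁻¹ * ‖z‖) := by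
        intro k
        obtain ⟨z, hzZ, hz1, hz2⟩ := hc ((k:ℝ)+1)⁻¹ (by positivity) ((k:ℝ)+1) (by positivity)
        exact ⟨z, hzZ, hz1, hz2⟩
      choose z hzZ hznorm hzre using hex
      have hzpos : ∀ k, 0 < ‖z k‖ := fun k => lt_of_lt_of_le (by positivity) (hznorm k)
      set v : ℕ → EuclideanSpace ℂ (Fin n) := fun k => (‖z k‖)⁻¹ • z k with hv
      have hvmem : ∀ k, v k ∈ Metric.sphere (0 : EuclideanSpace ℂ (Fin n)) 1 := by
        intro k
        simp only [hv, Metric.mem_sphere, dist_zero_right, norm_smul, norm_inv, norm_norm]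
        exact inv_mul_cancel₀ (hzpos k).ne'
      obtain ⟨θ, hθmem, φ, hφ, hconv⟩ :=
        (isCompact_sphere (0 : EuclideanSpace ℂ (Fin n)) 1).tendsto_subseq hvmem
      have hθ1 : ‖θ‖ = 1 := by simpa using hθmem
      have hdir : IsAsympDir Z θ := by
        refine ⟨hθ1, fun k => z (φ k), fun k => hzZ _, ?_, hconv⟩
        apply tendsto_atTop_mono (f := fun k : ℕ => (k:ℝ)+1)
        · intro k
          calc (k:ℝ)+1 ≤ (φ k : ℝ)+1 := by
                have : (k:ℝ) ≤ (φ k : ℝ) := Nat.cast_le.2 (hφ.id_le k); linarith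
            _ ≤ ‖z (φ k)‖ := hznorm (φ k)
        · exact tendsto_atTop_add_const_right _ 1 tendsto_natCast_atTop_atTop
      have hbound : ∀ k, (pairing (v (φ k)) ζ).re ≤ ((k:ℝ)+1)⁻¹ := by
        intro k
        have h1 : (pairing (v (φ k)) ζ).re = ‖z (φ k)‖⁻¹ * (pairing (z (φ k)) ζ).re :=
          pairing_smul_re _ _ _
        have hp := hzpos (φ k)
        have h2 : (pairing (z (φ k)) ζ).re < ((φ k:ℝ)+1)⁻¹ * ‖z (φ k)‖ := hzre (φ k)
        have h3 : ‖z (φ k)‖⁻¹ * (pairing (z (φ k)) ζ).re ≤ ((φ k:ℝ)+1)⁻¹ := by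
          rw [inv_mul_le_iff₀ hp]
          calc (pairing (z (φ k)) ζ).re ≤ ((φ k:ℝ)+1)⁻¹ * ‖z (φ k)‖ := h2.le
            _ = ‖z (φ k)‖ * ((φ k:ℝ)+1)⁻¹ := mul_comm _ _
        have h4 : ((φ k:ℝ)+1)⁻¹ ≤ ((k:ℝ)+1)⁻¹ := by
          apply inv_anti₀ (by positivity)
          have : (k:ℝ) ≤ (φ k : ℝ) := Nat.cast_le.2 (hφ.id_le k); linarith
        rw [h1]; exact h3.trans h4
      have hlim : Tendsto (fun k => (pairing (v (φ k)) ζ).re) atTop (𝓝 ((pairing θ ζ).re)) :=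
        ((cont_pairing ζ).tendsto θ).comp hconv
      have hzero : Tendsto (fun k : ℕ => ((k:ℝ)+1)⁻¹) atTop (𝓝 0) :=
        tendsto_inv_atTop_zero.comp (tendsto_atTop_add_const_right _ 1 tendsto_natCast_atTop_atTop)
      have hle : (pairing θ ζ).re ≤ 0 := le_of_tendsto_of_tendsto' hlim hzero hbound
      exact absurd (h θ hdir) (not_lt.2 hle)
    obtain ⟨σ, hσ, R, hR, hP2⟩ := hσR
    refine ⟨-R, σ, hσ, R, hR, ?_, hP2⟩
    intro w hw
    by_cases hcase : R ≤ ‖w‖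
    · have h1 := hP2 w hw hcase
      nlinarith
    · push_neg at hcase
      have habs := abs_pairing_le w ζ
      rw [hζ, mul_one] at habs
      have h2 : |(pairing w ζ).re| ≤ ‖pairing w ζ‖ := Complex.abs_re_le_norm _
      have := abs_le.1 (h2.trans habs)
      linarith [this.1]
  · rintro ⟨r, σ, hσ, R, hR, h1, h2⟩ θ ⟨hθ1, u, huZ, hunorm, hudir⟩
    have hev : ∀ᶠ k in atTop, σ ≤ (pairing ((‖u k‖)⁻¹ • u k) ζ).re := by
      filter_upwards [hunorm.eventually_ge_atTop (max R 1)] with k hk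
      have hpos : 0 < ‖u k‖ := lt_of_lt_of_le one_pos (le_trans (le_max_right _ _) hk)
      have hge := h2 (u k) (huZ k) (le_trans (le_max_left _ _) hk)
      rw [pairing_smul_re]
      calc σ = ‖u k‖⁻¹ * (σ * ‖u k‖) := by field_simp
        _ ≤ ‖u k‖⁻¹ * (pairing (u k) ζ).re :=
            mul_le_mul_of_nonneg_left hge (inv_nonneg.2 hpos.le)
    have hlim : Tendsto (fun k => (pairing ((‖u k‖)⁻¹ • u k) ζ).re) atTop
        (𝓝 ((pairing θ ζ).re)) := ((cont_pairing ζ).tendsto θ).comp hudir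
    exact lt_of_lt_of_le hσ (ge_of_tendsto hlim hev)
end

section
/- Let C ⊆ ℝⁿ be a nonempty closed convex set, and let I be the set of unit vectors ξ ∈ ℝⁿ such that ⟨θ,ξ⟩ > 0 for every asymptotic direction θ of C. If I ≠ ∅, then C = ⋂_{ξ∈I} { x ∈ ℝⁿ : ⟨x,ξ⟩ ≥ h_C(ξ) }, where h_C(ξ) := inf_{y∈C} ⟨y,ξ⟩. -/
open Filter Topology

/-- `θ` is an asymptotic direction of `C ⊆ ℝⁿ`: a unit vector which is the limit of
directions `x_k/‖x_k‖` of a sequence `x_k ∈ C` with `‖x_k‖ → ∞`. -/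
def IsAsympDirR {n : ℕ} (C : Set (EuclideanSpace ℝ (Fin n)))
    (θ : EuclideanSpace ℝ (Fin n)) : Prop :=
  ‖θ‖ = 1 ∧ ∃ u : ℕ → EuclideanSpace ℝ (Fin n),
    (∀ k, u k ∈ C) ∧ Tendsto (fun k => ‖u k‖) atTop atTop ∧
    Tendsto (fun k => (‖u k‖)⁻¹ • u k) atTop (𝓝 θ)

/-- From a sequence in `C` with norms growing at least linearly, extract an asymptotic
direction which is a limit of directions of a subsequence. -/
lemma asymp_of_seq {n : ℕ} {C : Set (EuclideanSpace ℝ (Fin n))}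
    (u : ℕ → EuclideanSpace ℝ (Fin n)) (huC : ∀ k, u k ∈ C)
    (hge : ∀ k : ℕ, (k : ℝ) + 1 ≤ ‖u k‖) :
    ∃ (θ : EuclideanSpace ℝ (Fin n)) (φ : ℕ → ℕ), StrictMono φ ∧ IsAsympDirR C θ ∧
      Tendsto (fun k => (‖u (φ k)‖)⁻¹ • u (φ k)) atTop (𝓝 θ) := by
  have hnorm : Tendsto (fun k => ‖u k‖) atTop atTop := by
    refine tendsto_atTop_mono hge ?_
    exact tendsto_atTop_add_const_right _ 1 tendsto_natCast_atTop_atTop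
  have hmem : ∀ k, (‖u k‖)⁻¹ • u k ∈ Metric.sphere (0 : EuclideanSpace ℝ (Fin n)) 1 := by
    intro k
    have h0 : (0 : ℝ) < ‖u k‖ := lt_of_lt_of_le (by positivity) (hge k)
    simp [norm_smul, abs_of_pos (inv_pos.2 h0), inv_mul_cancel₀ h0.ne']
  obtain ⟨θ, hθmem, φ, hφ, hconv⟩ := (isCompact_sphere
    (0 : EuclideanSpace ℝ (Fin n)) 1).tendsto_subseq hmem
  have hasym : IsAsympDirR C θ :=
    ⟨by simpa using hθmem, u ∘ φ, fun k => huC _, hnorm.comp hφ.tendsto_atTop, hconv⟩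
  exact ⟨θ, φ, hφ, hasym, hconv⟩

/-- Any lower bound for `⟨·,ξ₀⟩` on `C` forces `⟨θ,ξ₀⟩ ≥ 0` for asymptotic directions. -/
lemma asymp_inner_nonneg {n : ℕ} {C : Set (EuclideanSpace ℝ (Fin n))}
    {ξ₀ θ : EuclideanSpace ℝ (Fin n)} {b : ℝ}
    (hb : ∀ y ∈ C, b ≤ (inner ℝ y ξ₀ : ℝ)) (hθ : IsAsympDirR C θ) :
    0 ≤ (inner ℝ θ ξ₀ : ℝ) := by
  obtain ⟨-, u, huC, hnorm, hdir⟩ := hθ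
  have h1 : Tendsto (fun k => (inner ℝ ((‖u k‖)⁻¹ • u k) ξ₀ : ℝ)) atTop (𝓝 (inner ℝ θ ξ₀ : ℝ)) :=
    hdir.inner tendsto_const_nhds
  have h2 : Tendsto (fun k => (‖u k‖)⁻¹ * b) atTop (𝓝 0) := by
    simpa using (hnorm.inv_tendsto_atTop).mul_const b
  refine le_of_tendsto_of_tendsto h2 h1 ?_
  filter_upwards [hnorm.eventually_ge_atTop 1] with k hk
  have h0 : (0 : ℝ) ≤ (‖u k‖)⁻¹ := by positivity
  rw [real_inner_smul_left]
  exact mul_le_mul_of_nonneg_left (hb _ (huC k)) h0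

/-- For `ξ` having positive inner product with all asymptotic directions,
`⟨·,ξ⟩` is bounded below on `C`. -/
lemma bddBelow_inner {n : ℕ} {C : Set (EuclideanSpace ℝ (Fin n))}
    {ξ : EuclideanSpace ℝ (Fin n)} (hξ1 : ‖ξ‖ = 1)
    (hξ : ∀ θ, IsAsympDirR C θ → 0 < (inner ℝ θ ξ : ℝ)) :
    BddBelow ((fun y => (inner ℝ y ξ : ℝ)) '' C) := by
  by_contra hb
  rw [not_bddBelow_iff] at hb
  have h : ∀ k : ℕ, ∃ y ∈ C, (inner ℝ y ξ : ℝ) < -((k : ℝ) + 1) := by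
    intro k
    obtain ⟨a, ⟨y, hyC, rfl⟩, hlt⟩ := hb (-((k : ℝ) + 1))
    exact ⟨y, hyC, hlt⟩
  choose u huC hu using h
  have hge : ∀ k : ℕ, (k : ℝ) + 1 ≤ ‖u k‖ := by
    intro k
    have h1 := abs_real_inner_le_norm (u k) ξ
    rw [hξ1, mul_one] at h1
    have h2 : -(inner ℝ (u k) ξ : ℝ) ≤ |(inner ℝ (u k) ξ : ℝ)| := neg_le_abs _
    linarith [hu k]
  obtain ⟨θ, φ, hφ, hθ, hdir⟩ := asymp_of_seq u huC hge
  have hle : (inner ℝ θ ξ : ℝ) ≤ 0 := by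
    have h1 : Tendsto (fun k => (inner ℝ ((‖u (φ k)‖)⁻¹ • u (φ k)) ξ : ℝ)) atTop
        (𝓝 (inner ℝ θ ξ : ℝ)) := hdir.inner tendsto_const_nhds
    refine le_of_tendsto h1 (Eventually.of_forall fun k => ?_)
    have h0 : (0 : ℝ) ≤ (‖u (φ k)‖)⁻¹ := by positivity
    rw [real_inner_smul_left]
    have : (inner ℝ (u (φ k)) ξ : ℝ) ≤ 0 := le_of_lt (lt_of_lt_of_le (hu _) (neg_nonpos.2 (by positivity)))
    exact mul_nonpos_of_nonneg_of_nonpos h0 this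
  exact absurd (hξ θ hθ) (not_lt.2 hle)

/-- A nonempty closed convex `C ⊆ ℝⁿ` is the intersection of the closed half spaces
`⟨x,ξ⟩ ≥ h_C(ξ)`, where `ξ` ranges over the (assumed nonempty) set `I` of unit vectors
having positive inner product with every asymptotic direction of `C`, and
`h_C(ξ) = inf_{y ∈ C} ⟨y,ξ⟩`. -/
theorem closed_convex_eq_iInter_halfspaces {n : ℕ}
    (C : Set (EuclideanSpace ℝ (Fin n))) (hne : C.Nonempty) (hcl : IsClosed C)
    (hconv : Convex ℝ C)
    (hI : {ξ : EuclideanSpace ℝ (Fin n) |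
        ‖ξ‖ = 1 ∧ ∀ θ, IsAsympDirR C θ → 0 < (inner ℝ θ ξ : ℝ)}.Nonempty) :
    C = ⋂ ξ ∈ {ξ : EuclideanSpace ℝ (Fin n) |
          ‖ξ‖ = 1 ∧ ∀ θ, IsAsympDirR C θ → 0 < (inner ℝ θ ξ : ℝ)},
        {x : EuclideanSpace ℝ (Fin n) |
          sInf ((fun y => (inner ℝ y ξ : ℝ)) '' C) ≤ (inner ℝ x ξ : ℝ)} := by
  apply Set.Subset.antisymm
  · intro x hx
    simp only [Set.mem_iInter, Set.mem_setOf_eq]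
    intro ξ hξ
    exact csInf_le (bddBelow_inner hξ.1 hξ.2) ⟨x, hx, rfl⟩
  · intro x hx
    by_contra hxC
    obtain ⟨f, u, hfx, hfC⟩ := geometric_hahn_banach_point_closed hconv hcl hxC
    set ξ₀ := (InnerProductSpace.toDual ℝ (EuclideanSpace ℝ (Fin n))).symm f with hξ₀def
    have hξ₀ : ∀ y, (inner ℝ y ξ₀ : ℝ) = f y := by
      intro y
      rw [real_inner_comm]
      exact InnerProductSpace.toDual_symm_apply
    obtain ⟨ξ₁, hξ₁1, hξ₁pos⟩ := hI
    have hbdd := bddBelow_inner hξ₁1 hξ₁pos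
    set b₁ : ℝ := sInf ((fun y => (inner ℝ y ξ₁ : ℝ)) '' C) with hb₁def
    have hb₁ : ∀ y ∈ C, b₁ ≤ (inner ℝ y ξ₁ : ℝ) := fun y hy => csInf_le hbdd ⟨y, hy, rfl⟩
    -- choose t
    set d : ℝ := (inner ℝ x ξ₁ : ℝ) - b₁ with hddef
    have hε : (0 : ℝ) < u - f x := by linarith
    set t : ℝ := (u - f x) / (2 * (|d| + 1)) with htdef
    have ht : 0 < t := by positivity
    have htd : t * d < u - f x := by
      have h1 : t * d ≤ t * |d| := mul_le_mul_of_nonneg_left (le_abs_self d) ht.le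
      have h2 : t * (|d| + 1) = (u - f x) / 2 := by
        rw [htdef]
        field_simp
      nlinarith [abs_nonneg d]
    set ξ' : EuclideanSpace ℝ (Fin n) := ξ₀ + t • ξ₁ with hξ'def
    have hinner' : ∀ y, (inner ℝ y ξ' : ℝ) = f y + t * (inner ℝ y ξ₁ : ℝ) := by
      intro y
      rw [hξ'def, inner_add_right, real_inner_smul_right, hξ₀]
    have hClow : ∀ y ∈ C, u + t * b₁ < (inner ℝ y ξ' : ℝ) := by
      intro y hy
      rw [hinner' y]
      have := hfC y hy
      have := mul_le_mul_of_nonneg_left (hb₁ y hy) ht.le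
      linarith
    have hxup : (inner ℝ x ξ' : ℝ) < u + t * b₁ := by
      rw [hinner' x]
      have : t * (inner ℝ x ξ₁ : ℝ) - t * b₁ = t * d := by rw [hddef]; ring
      linarith
    obtain ⟨y₀, hy₀⟩ := hne
    have hξ'ne : ξ' ≠ 0 := by
      intro h0
      have h1 := hClow y₀ hy₀
      have h2 := hxup
      rw [h0] at h1 h2
      simp only [inner_zero_right] at h1 h2
      linarith
    have hnpos : (0 : ℝ) < ‖ξ'‖ := norm_pos_iff.2 hξ'ne
    set ξ : EuclideanSpace ℝ (Fin n) := (‖ξ'‖)⁻¹ • ξ' with hξdef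
    have hξnorm : ‖ξ‖ = 1 := by
      rw [hξdef, norm_smul, norm_inv, norm_norm, inv_mul_cancel₀ hnpos.ne']
    have hξI : ∀ θ, IsAsympDirR C θ → 0 < (inner ℝ θ ξ : ℝ) := by
      intro θ hθ
      have h0 : 0 ≤ (inner ℝ θ ξ₀ : ℝ) := by
        refine asymp_inner_nonneg (b := u) (fun y hy => ?_) hθ
        rw [hξ₀ y]; exact (hfC y hy).le
      have h1 : 0 < (inner ℝ θ ξ₁ : ℝ) := hξ₁pos θ hθ
      have : (inner ℝ θ ξ' : ℝ) = (inner ℝ θ ξ₀ : ℝ) + t * (inner ℝ θ ξ₁ : ℝ) := by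
        rw [hξ'def, inner_add_right, real_inner_smul_right]
      rw [hξdef, real_inner_smul_right, this]
      positivity
    -- contradiction with hx
    simp only [Set.mem_iInter, Set.mem_setOf_eq] at hx
    have hmem := hx ξ ⟨hξnorm, hξI⟩
    have hxξ : (inner ℝ x ξ : ℝ) < (‖ξ'‖)⁻¹ * (u + t * b₁) := by
      rw [hξdef, real_inner_smul_right]
      exact mul_lt_mul_of_pos_left hxup (inv_pos.2 hnpos)
    have hlb : (‖ξ'‖)⁻¹ * (u + t * b₁) ≤ sInf ((fun y => (inner ℝ y ξ : ℝ)) '' C) := by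
      refine le_csInf ⟨_, ⟨y₀, hy₀, rfl⟩⟩ ?_
      rintro a ⟨y, hy, rfl⟩
      show ‖ξ'‖⁻¹ * (u + t * b₁) ≤ (inner ℝ y ((‖ξ'‖)⁻¹ • ξ') : ℝ)
      rw [real_inner_smul_right]
      exact mul_le_mul_of_nonneg_left (hClow y hy).le (inv_nonneg.2 hnpos.le)
    linarith
end

section
/- Write z = x + iy ∈ ℂⁿ with x = (x₁,x′) ∈ ℝ × ℝ^{n−1}, and for ζ = ξ + iη ∈ ℂⁿ set zζ := Σ_k z_k ζ_k, so that Re(zζ) = ⟨x,ξ⟩ − ⟨y,η⟩. Let b ∈ ℝ, κ > 0, H ∈ ℝ, C ≥ 0, let D ⊆ { z = x+iy ∈ ℂⁿ : |x′| + |y| ≤ κ(x₁ − b) } be a Lebesgue-measurable set, and let ν : ℂⁿ → ℂ be measurable with |ν(z)| ≤ C e^{H x₁} for all z ∈ D. If ζ = ξ + iη satisfies ξ₁ > κ(|ξ′| + |η|) + H, then the function z ↦ e^{−zζ} ν(z) is Lebesgue-integrable on D. -/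
open MeasureTheory

/-- The Euclidean norm of a vector of coordinates. -/
noncomputable def euclNorm {m : ℕ} (x : Fin m → ℝ) : ℝ :=
  Real.sqrt (∑ k, x k ^ 2)

/-- The Euclidean norm `|x′|` of the last `m` coordinates of `x = (x₁, x′)`. -/
noncomputable def primeNorm {m : ℕ} (x : Fin (m + 1) → ℝ) : ℝ :=
  Real.sqrt (∑ k, if k = 0 then 0 else x k ^ 2)

/-- The complex pairing `zζ = Σ_k z_k ζ_k`, where `z = x + iy ∈ ℂⁿ` is represented by the
pair `(x, y)` of real vectors. -/
noncomputable def mpairing {m : ℕ}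
    (z : EuclideanSpace ℝ (Fin (m + 1)) × EuclideanSpace ℝ (Fin (m + 1)))
    (ζ : EuclideanSpace ℂ (Fin (m + 1))) : ℂ :=
  ∑ k, ((z.1 k : ℂ) + (z.2 k : ℂ) * Complex.I) * ζ k

/- Auxiliary lemmas -/

lemma aux_sqrt_add_le {a b : ℝ} (ha : 0 ≤ a) (hb : 0 ≤ b) :
    Real.sqrt (a + b) ≤ Real.sqrt a + Real.sqrt b := by
  have h1 : a + b ≤ (Real.sqrt a + Real.sqrt b) ^ 2 := by
    have := Real.sq_sqrt ha
    have := Real.sq_sqrt hb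
    have := Real.sqrt_nonneg a
    have := Real.sqrt_nonneg b
    nlinarith
  calc Real.sqrt (a + b) ≤ Real.sqrt ((Real.sqrt a + Real.sqrt b) ^ 2) :=
        Real.sqrt_le_sqrt h1
    _ = Real.sqrt a + Real.sqrt b := by
        rw [Real.sqrt_sq (by positivity)]

lemma aux_one_add_pow_le {t : ℝ} (ht : 0 ≤ t) (m : ℕ) :
    (1 + t) ^ m ≤ 2 ^ m * (1 + t ^ m) := by
  rcases le_total t 1 with h | h
  · calc (1 + t) ^ m ≤ 2 ^ m := by
          apply pow_le_pow_left₀ (by linarith) (by linarith)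
      _ ≤ 2 ^ m * (1 + t ^ m) := by
          nlinarith [pow_nonneg ht m, pow_nonneg (zero_le_two (α := ℝ)) m]
  · calc (1 + t) ^ m ≤ (2 * t) ^ m := by
          apply pow_le_pow_left₀ (by linarith) (by linarith)
      _ = 2 ^ m * t ^ m := mul_pow 2 t m
      _ ≤ 2 ^ m * (1 + t ^ m) := by
          nlinarith [pow_nonneg ht m, pow_nonneg (zero_le_two (α := ℝ)) m]

lemma aux_exp_le_one_add_pow {a t : ℝ} (ha : 0 < a) (ht : 0 ≤ t) (m : ℕ) :
    Real.exp (-(a * t)) * (1 + t) ^ m ≤ 2 ^ m * (1 + (m.factorial : ℝ) / a ^ m) := by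
  have he : 0 < Real.exp (-(a * t)) := Real.exp_pos _
  have he1 : Real.exp (-(a * t)) ≤ 1 := by
    apply Real.exp_le_one_iff.mpr
    nlinarith
  have htm : t ^ m ≤ (m.factorial : ℝ) / a ^ m * Real.exp (a * t) := by
    have := Real.pow_div_factorial_le_exp (x := a * t) (by positivity) m
    have hfac : (0 : ℝ) < m.factorial := by exact_mod_cast m.factorial_pos
    have ham : (0 : ℝ) < a ^ m := by positivity
    rw [mul_pow] at this
    rw [div_le_iff₀ hfac] at this
    calc t ^ m = a ^ m * t ^ m / a ^ m := by field_simp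
      _ ≤ Real.exp (a * t) * m.factorial / a ^ m := by
          gcongr
      _ = (m.factorial : ℝ) / a ^ m * Real.exp (a * t) := by ring
  have key : Real.exp (-(a * t)) * t ^ m ≤ (m.factorial : ℝ) / a ^ m := by
    calc Real.exp (-(a * t)) * t ^ m
        ≤ Real.exp (-(a * t)) * ((m.factorial : ℝ) / a ^ m * Real.exp (a * t)) := by
          apply mul_le_mul_of_nonneg_left htm he.le
      _ = (m.factorial : ℝ) / a ^ m * (Real.exp (-(a * t)) * Real.exp (a * t)) := by ring
      _ = (m.factorial : ℝ) / a ^ m := by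
          rw [← Real.exp_add]; simp
  calc Real.exp (-(a * t)) * (1 + t) ^ m
      ≤ Real.exp (-(a * t)) * (2 ^ m * (1 + t ^ m)) := by
        apply mul_le_mul_of_nonneg_left (aux_one_add_pow_le ht m) he.le
    _ = 2 ^ m * (Real.exp (-(a * t)) + Real.exp (-(a * t)) * t ^ m) := by ring
    _ ≤ 2 ^ m * (1 + (m.factorial : ℝ) / a ^ m) := by
        apply mul_le_mul_of_nonneg_left _ (by positivity)
        exact add_le_add he1 key

/-- Integrability of `exp (-a‖x‖)` on a finite-dimensional normed space with a Haar measure. -/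
lemma aux_integrable_exp_neg_norm {E : Type*} [NormedAddCommGroup E] [NormedSpace ℝ E]
    [FiniteDimensional ℝ E] [MeasurableSpace E] [BorelSpace E]
    (μ : Measure E) [μ.IsAddHaarMeasure] {a : ℝ} (ha : 0 < a) :
    Integrable (fun x => Real.exp (-(a * ‖x‖))) μ := by
  set m : ℕ := Module.finrank ℝ E + 1 with hm
  set K : ℝ := 2 ^ m * (1 + (m.factorial : ℝ) / a ^ m) with hK
  have hKpos : 0 < K := by positivity
  have hint : Integrable (fun x : E => K * (1 + ‖x‖) ^ (-(m : ℝ))) μ := by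
    apply Integrable.const_mul
    apply integrable_one_add_norm
    rw [hm]; push_cast; linarith
  refine hint.mono' ?_ (ae_of_all _ fun x => ?_)
  · exact (Real.continuous_exp.comp (continuous_const.mul continuous_norm).neg).aestronglyMeasurable
  · have h1 : (0:ℝ) < 1 + ‖x‖ := by positivity
    have hrw : (1 + ‖x‖) ^ (-(m : ℝ)) = ((1 + ‖x‖) ^ m)⁻¹ := by
      rw [Real.rpow_neg h1.le, Real.rpow_natCast]
    rw [Real.norm_eq_abs, abs_of_pos (Real.exp_pos _), hrw, ← div_eq_mul_inv,
      le_div_iff₀ (by positivity)]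
    exact aux_exp_le_one_add_pow ha (norm_nonneg x) m

lemma aux_sum_split {m : ℕ} (f : Fin (m + 1) → ℝ) :
    ∑ k, f k = f 0 + ∑ k, (if k = 0 then 0 else f k) := by
  have h : ∀ k : Fin (m + 1), f k =
      (if k = 0 then f 0 else 0) + (if k = 0 then 0 else f k) := by
    intro k
    by_cases hk : k = 0
    · subst hk; simp
    · simp [hk]
  rw [Finset.sum_congr rfl fun k _ => h k, Finset.sum_add_distrib]
  congr 1
  simp

instance aux_haar_prod {n : ℕ} :
    ((volume : Measure (EuclideanSpace ℝ (Fin (n + 1)) ×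
      EuclideanSpace ℝ (Fin (n + 1))))).IsAddHaarMeasure :=
  Measure.prod.instIsAddHaarMeasure volume volume

set_option maxHeartbeats 1000000 in
/-- Convergence of the Laplace integral: if `D ⊆ {z = x+iy : |x′| + |y| ≤ κ(x₁ − b)}` and
`|ν(z)| ≤ C e^{H x₁}` on `D`, then for `ζ = ξ + iη` with `ξ₁ > κ(|ξ′| + |η|) + H` the
function `z ↦ e^{−zζ} ν(z)` is Lebesgue-integrable on `D`.  Here `ℂⁿ ≃ ℝⁿ × ℝⁿ` carries
Lebesgue measure, `z = (x, y)`. -/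
theorem laplace_transform_integrand_integrable {n : ℕ}
    (b κ H C : ℝ) (hκ : 0 < κ) (hC : 0 ≤ C)
    (D : Set (EuclideanSpace ℝ (Fin (n + 1)) × EuclideanSpace ℝ (Fin (n + 1))))
    (hDmeas : MeasurableSet D)
    (hD : ∀ z ∈ D, primeNorm z.1 + euclNorm z.2 ≤ κ * (z.1 0 - b))
    (ν : EuclideanSpace ℝ (Fin (n + 1)) × EuclideanSpace ℝ (Fin (n + 1)) → ℂ)
    (hν : Measurable ν)
    (hbound : ∀ z ∈ D, ‖ν z‖ ≤ C * Real.exp (H * z.1 0))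
    (ζ : EuclideanSpace ℂ (Fin (n + 1)))
    (hζ : κ * (primeNorm (fun k => (ζ k).re) + euclNorm (fun k => (ζ k).im)) + H
        < (ζ 0).re) :
    IntegrableOn (fun z => Complex.exp (-(mpairing z ζ)) * ν z) D := by
  set ξ : Fin (n + 1) → ℝ := fun k => (ζ k).re with hξ
  set η : Fin (n + 1) → ℝ := fun k => (ζ k).im with hη
  set M : ℝ := primeNorm ξ + euclNorm η with hMdef
  have hM0 : 0 ≤ M := add_nonneg (Real.sqrt_nonneg _) (Real.sqrt_nonneg _)
  set ε : ℝ := ξ 0 - (κ * M + H) with hεdef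
  have hε : 0 < ε := by simp only [hεdef]; linarith [hζ]
  set A : ℝ := 1 + κ with hAdef
  have hA : 0 < A := by positivity
  set a : ℝ := ε / A with hadef
  have ha : 0 < a := div_pos hε hA
  set c₀ : ℝ := 2 * |b| + κ * |b| with hc₀
  set K : ℝ := C * Real.exp (a * c₀ - κ * M * b) with hKdef
  have hK0 : 0 ≤ K := by positivity
  -- measurability of the integrand
  have hmp : Measurable fun z : EuclideanSpace ℝ (Fin (n + 1)) ×
      EuclideanSpace ℝ (Fin (n + 1)) => mpairing z ζ := by
    unfold mpairing
    apply Finset.measurable_sum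
    intro k _
    apply Measurable.mul _ measurable_const
    apply Measurable.add
    · fun_prop
    · fun_prop
  have hfm : Measurable fun z : EuclideanSpace ℝ (Fin (n + 1)) ×
      EuclideanSpace ℝ (Fin (n + 1)) =>
      Complex.exp (-(mpairing z ζ)) * ν z :=
    (Complex.measurable_exp.comp hmp.neg).mul hν
  -- the dominating function
  have hg : IntegrableOn (fun z : EuclideanSpace ℝ (Fin (n + 1)) ×
      EuclideanSpace ℝ (Fin (n + 1)) => K * Real.exp (-(a * ‖z‖))) D :=
    ((aux_integrable_exp_neg_norm volume ha).const_mul K).integrableOn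
  refine hg.mono' hfm.aestronglyMeasurable ?_
  rw [ae_restrict_iff' hDmeas]
  refine ae_of_all _ fun z hz => ?_
  -- pointwise bound on D
  have h1 := hD z hz
  have h2 := hbound z hz
  have hpn : 0 ≤ primeNorm z.1 := Real.sqrt_nonneg _
  have hen : 0 ≤ euclNorm z.2 := Real.sqrt_nonneg _
  set x0 : ℝ := z.1 0 with hx0
  have hx0b : b ≤ x0 := by nlinarith
  -- real part of the pairing
  have hre : (mpairing z ζ).re = ∑ k, z.1 k * ξ k - ∑ k, z.2 k * η k := by
    unfold mpairing
    rw [Complex.re_sum, ← Finset.sum_sub_distrib]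
    apply Finset.sum_congr rfl
    intro k _
    simp [Complex.mul_re, Complex.add_re, Complex.add_im]
    try ring
  -- Cauchy-Schwarz for the prime part
  have hcs1 : -(primeNorm z.1 * primeNorm ξ) ≤ ∑ k, (if k = 0 then 0 else z.1 k * ξ k) := by
    have hcs := Real.sum_mul_le_sqrt_mul_sqrt Finset.univ
      (fun k => if k = 0 then 0 else -(z.1 k)) (fun k => if k = 0 then 0 else ξ k)
    have e1 : ∀ k : Fin (n + 1), (if k = 0 then 0 else -(z.1 k)) *
        (if k = 0 then 0 else ξ k) = -(if k = 0 then 0 else z.1 k * ξ k) := by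
      intro k; by_cases hk : k = 0 <;> simp [hk]
    have e2 : ∀ k : Fin (n + 1), (if k = 0 then (0:ℝ) else -(z.1 k)) ^ 2 =
        (if k = 0 then 0 else z.1 k ^ 2) := by
      intro k; by_cases hk : k = 0 <;> simp [hk]
    have e3 : ∀ k : Fin (n + 1), (if k = 0 then (0:ℝ) else ξ k) ^ 2 =
        (if k = 0 then 0 else ξ k ^ 2) := by
      intro k; by_cases hk : k = 0 <;> simp [hk]
    simp only [Finset.sum_congr rfl fun k _ => e1 k,
      Finset.sum_congr rfl fun k _ => e2 k,
      Finset.sum_congr rfl fun k _ => e3 k, Finset.sum_neg_distrib] at hcs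
    unfold primeNorm
    linarith
  -- Cauchy-Schwarz for the imaginary part
  have hcs2 : ∑ k, z.2 k * η k ≤ euclNorm z.2 * euclNorm η := by
    have := Real.sum_mul_le_sqrt_mul_sqrt Finset.univ (fun k => z.2 k) (fun k => η k)
    unfold euclNorm
    simpa using this
  -- lower bound on the real part
  have hsplit := aux_sum_split (fun k => z.1 k * ξ k)
  have hrelb : x0 * ξ 0 - κ * (x0 - b) * M ≤ (mpairing z ζ).re := by
    have hb1 : primeNorm z.1 * primeNorm ξ + euclNorm z.2 * euclNorm η
        ≤ (primeNorm z.1 + euclNorm z.2) * M := by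
      have hp1 : primeNorm ξ ≤ M :=
        le_add_of_nonneg_right (Real.sqrt_nonneg _)
      have hp2 : euclNorm η ≤ M :=
        le_add_of_nonneg_left (Real.sqrt_nonneg _)
      nlinarith
    have hb2 : (primeNorm z.1 + euclNorm z.2) * M ≤ κ * (x0 - b) * M :=
      mul_le_mul_of_nonneg_right h1 hM0
    rw [hre, hsplit]
    simp only at hcs1 hcs2 ⊢
    linarith
  -- bound on the norm of z
  have hzn : ‖z‖ ≤ A * x0 + c₀ := by
    have hn1 : ‖z.1‖ ≤ |x0| + primeNorm z.1 := by
      have : ‖z.1‖ = Real.sqrt (∑ k, z.1 k ^ 2) := by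
        rw [EuclideanSpace.norm_eq]
        congr 1
        exact Finset.sum_congr rfl fun k _ => by rw [Real.norm_eq_abs, sq_abs]
      rw [this, aux_sum_split (fun k => z.1 k ^ 2)]
      calc Real.sqrt (z.1 0 ^ 2 + ∑ k, (if k = 0 then 0 else z.1 k ^ 2))
          ≤ Real.sqrt (z.1 0 ^ 2) + Real.sqrt (∑ k, (if k = 0 then 0 else z.1 k ^ 2)) := by
            apply aux_sqrt_add_le (sq_nonneg _)
            apply Finset.sum_nonneg
            intro k _; positivity
        _ = |x0| + primeNorm z.1 := by rw [Real.sqrt_sq_eq_abs]; rfl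
    have hn2 : ‖z.2‖ = euclNorm z.2 := by
      rw [EuclideanSpace.norm_eq]
      unfold euclNorm
      congr 1
      exact Finset.sum_congr rfl fun k _ => by rw [Real.norm_eq_abs, sq_abs]
    have habs : |x0| ≤ x0 + 2 * |b| := by
      rcases abs_cases x0 with ⟨h, _⟩ | ⟨h, _⟩
      · linarith [abs_nonneg b]
      · linarith [neg_abs_le b, le_abs_self b]
    have hnorm : ‖z‖ ≤ ‖z.1‖ + ‖z.2‖ := by
      rw [Prod.norm_def]
      exact max_le (le_add_of_nonneg_right (norm_nonneg _))
        (le_add_of_nonneg_left (norm_nonneg _))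
    have hκb : -(κ * b) ≤ κ * |b| := by nlinarith [neg_abs_le b]
    calc ‖z‖ ≤ ‖z.1‖ + ‖z.2‖ := hnorm
      _ ≤ (|x0| + primeNorm z.1) + euclNorm z.2 := by rw [hn2]; linarith
      _ ≤ (x0 + 2 * |b|) + κ * (x0 - b) := by linarith
      _ ≤ A * x0 + c₀ := by simp only [hAdef, hc₀]; nlinarith
  -- conclude
  have hexp1 : -(mpairing z ζ).re + H * x0 ≤ -(ε * x0) - κ * M * b := by
    have : -(mpairing z ζ).re ≤ -(x0 * ξ 0) + κ * (x0 - b) * M := by linarith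
    simp only [hεdef]
    nlinarith [this]
  have hexp2 : -(ε * x0) ≤ a * c₀ - a * ‖z‖ := by
    have h5 : a * ‖z‖ ≤ a * (A * x0 + c₀) := mul_le_mul_of_nonneg_left hzn ha.le
    have h6 : a * (A * x0 + c₀) = ε * x0 + a * c₀ := by
      simp only [hadef]
      field_simp
    linarith
  calc ‖Complex.exp (-(mpairing z ζ)) * ν z‖
      = Real.exp (-(mpairing z ζ).re) * ‖ν z‖ := by
        rw [norm_mul, Complex.norm_exp, Complex.neg_re]
    _ ≤ Real.exp (-(mpairing z ζ).re) * (C * Real.exp (H * x0)) := by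
        apply mul_le_mul_of_nonneg_left h2 (Real.exp_pos _).le
    _ = C * Real.exp (-(mpairing z ζ).re + H * x0) := by
        rw [Real.exp_add]; ring
    _ ≤ C * Real.exp ((a * c₀ - κ * M * b) + -(a * ‖z‖)) := by
        apply mul_le_mul_of_nonneg_left _ hC
        apply Real.exp_le_exp.mpr
        linarith
    _ = K * Real.exp (-(a * ‖z‖)) := by
        rw [hKdef, Real.exp_add]; ring
end

section
/- Let ξ ∈ ℝⁿ with ‖ξ‖ = 1, let 0 < δ ≤ 1, and let x ∈ ℝⁿ. If ⟨x,τ⟩ ≥ 0 for every nonzero τ ∈ ℝⁿ with ‖τ/‖τ‖ − ξ‖ ≤ δ, then ⟨x,ξ⟩ ≥ (δ/2)‖x‖. -/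
/-- Dual-cone estimate: let `ξ ∈ ℝⁿ` be a unit vector, `0 < δ ≤ 1` and `x ∈ ℝⁿ`.
If `⟨x,τ⟩ ≥ 0` for every nonzero `τ` whose direction `τ/‖τ‖` is within distance `δ` of
`ξ`, then `⟨x,ξ⟩ ≥ (δ/2)‖x‖`. -/
theorem dual_cone_estimate {n : ℕ} (ξ : EuclideanSpace ℝ (Fin n)) (hξ : ‖ξ‖ = 1)
    (δ : ℝ) (hδ0 : 0 < δ) (hδ1 : δ ≤ 1) (x : EuclideanSpace ℝ (Fin n))
    (hx : ∀ τ : EuclideanSpace ℝ (Fin n), τ ≠ 0 → ‖(‖τ‖)⁻¹ • τ - ξ‖ ≤ δ →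
      0 ≤ (inner ℝ x τ : ℝ)) :
    δ / 2 * ‖x‖ ≤ (inner ℝ x ξ : ℝ) := by
  rcases eq_or_ne x 0 with rfl | hx0
  · simp
  have hxn : (0:ℝ) < ‖x‖ := norm_pos_iff.mpr hx0
  set τ : EuclideanSpace ℝ (Fin n) := ξ - (δ / 2 / ‖x‖) • x with hτdef
  have hdist : ‖τ - ξ‖ = δ / 2 := by
    have : τ - ξ = -((δ / 2 / ‖x‖) • x) := by rw [hτdef]; abel
    rw [this, norm_neg, norm_smul, Real.norm_eq_abs,
      abs_of_nonneg (by positivity)]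
    field_simp
  have hτlow : 1 - δ / 2 ≤ ‖τ‖ := by
    have := norm_sub_norm_le ξ (ξ - τ)
    have h2 : ‖ξ - τ‖ = δ / 2 := by rw [← norm_neg]; simpa [neg_sub] using hdist
    simpa [hξ, h2] using this
  have hτpos : (0:ℝ) < ‖τ‖ := lt_of_lt_of_le (by linarith) hτlow
  have hτhigh : ‖τ‖ ≤ 1 + δ / 2 := by
    have := norm_le_norm_add_norm_sub' τ ξ
    simpa [hξ, hdist] using this
  have hτne : τ ≠ 0 := norm_pos_iff.mp hτpos
  have hdir : ‖(‖τ‖)⁻¹ • τ - ξ‖ ≤ δ := by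
    have h1 : ‖(‖τ‖)⁻¹ • τ - τ‖ = |1 - ‖τ‖| := by
      have : (‖τ‖)⁻¹ • τ - τ = ((‖τ‖)⁻¹ - 1) • τ := by
        rw [sub_smul, one_smul]
      rw [this, norm_smul, Real.norm_eq_abs]
      rw [show (‖τ‖)⁻¹ - 1 = (1 - ‖τ‖) / ‖τ‖ by field_simp, abs_div,
        abs_of_pos hτpos, div_mul_cancel₀ _ hτpos.ne']
    calc ‖(‖τ‖)⁻¹ • τ - ξ‖ ≤ ‖(‖τ‖)⁻¹ • τ - τ‖ + ‖τ - ξ‖ := by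
          simpa using norm_sub_le_norm_sub_add_norm_sub ((‖τ‖)⁻¹ • τ) τ ξ
      _ ≤ δ / 2 + δ / 2 := by
          rw [h1, hdist]
          have : |1 - ‖τ‖| ≤ δ / 2 := abs_le.mpr ⟨by linarith, by linarith⟩
          linarith
      _ = δ := by ring
  have hpos := hx τ hτne hdir
  have hinner : (inner ℝ x τ : ℝ) = (inner ℝ x ξ : ℝ) - δ / 2 * ‖x‖ := by
    rw [hτdef, inner_sub_right, inner_smul_right, real_inner_self_eq_norm_sq]
    field_simp
  linarith [hinner ▸ hpos]
end
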